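/- Let N̄ ≥ 0 and let G be a 2×2 real symmetric positive definite matrix. Define the complex Hermitian matrix J̃⁻¹ = [[N̄+1/2, i/2],[−i/2, N̄+1/2]]. Then tr(√G · Re(J̃⁻¹) · √G) + tr|√G · Im(J̃⁻¹) · √G| = (N̄ + 1/2)·tr G + √(det G), where Im(J̃⁻¹) = [[0,1/2],[−1/2,0]] (so that i·Im part gives the Hermitian matrix (1/2)[[0,−i],[i,0]]), and |M| denotes the positive part √(M*M). -/

import Mathlib

lemma trace_eq_sum_eig {n : Type*} [Fintype n] [DecidableEq n]
    {A : Matrix n n ℂ} (hA : A.IsHermitian) :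
    A.trace = ∑ i, (hA.eigenvalues i : ℂ) := by
  conv_lhs => rw [hA.spectral_theorem, Unitary.conjStarAlgAut_apply]
  rw [Matrix.trace_mul_cycle]
  have h1 : (star (hA.eigenvectorUnitary : Matrix n n ℂ)) *
      (hA.eigenvectorUnitary : Matrix n n ℂ) = 1 := hA.eigenvectorUnitary.2.1
  rw [h1, Matrix.one_mul, Matrix.trace_diagonal]
  rfl

/-- The RLD bound of the quantum Gaussian shift model: with `S = √G` (`S² = G`,
`S ≥ 0`), `tr(√G·Re(J̃⁻¹)·√G) + tr|√G·Im(J̃⁻¹)·√G| = (N̄+1/2)·tr G + √(det G)`,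
where `J̃⁻¹ = [[N̄+1/2, i/2],[−i/2, N̄+1/2]]` and `tr|·|` is the sum of the absolute
values of the eigenvalues of the Hermitian matrix `√G·(i/2·E)·√G`. -/
theorem stmt_19 (N : ℝ) (hN : 0 ≤ N) (G S : Matrix (Fin 2) (Fin 2) ℝ)
    (hG : G.PosDef) (hS : S.PosSemidef) (hSS : S * S = G)
    (hH : ((S.map (fun x => (x : ℂ)))
        * !![0, Complex.I / 2; -Complex.I / 2, 0]
        * (S.map (fun x => (x : ℂ)))).IsHermitian) :
    ((S.map (fun x => (x : ℂ)))
        * (((N + 1/2 : ℝ) : ℂ) • (1 : Matrix (Fin 2) (Fin 2) ℂ))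
        * (S.map (fun x => (x : ℂ)))).trace
      + ((∑ i, |hH.eigenvalues i| : ℝ) : ℂ)
    = (((N + 1/2) * G.trace + Real.sqrt G.det : ℝ) : ℂ) := by
  have hsym : S 1 0 = S 0 1 := by
    have := hS.isHermitian
    have := congrFun (congrFun this.symm 1) 0
    simpa [Matrix.conjTranspose_apply] using this
  set T : Matrix (Fin 2) (Fin 2) ℂ := S.map (fun x => (x : ℂ)) with hT
  set A : Matrix (Fin 2) (Fin 2) ℂ := !![0, Complex.I / 2; -Complex.I / 2, 0] with hA
  have hA00 : A 0 0 = 0 := rfl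
  have hA01 : A 0 1 = Complex.I / 2 := rfl
  have hA10 : A 1 0 = -Complex.I / 2 := rfl
  have hA11 : A 1 1 = 0 := rfl
  -- trace of M is 0
  have htr : (T * A * T).trace = 0 := by
    simp only [hT, Matrix.trace_fin_two, Matrix.mul_apply, Fin.sum_univ_two,
      Matrix.map_apply, hA00, hA01, hA10, hA11]
    rw [hsym]
    ring
  have hdetS : S.det * S.det = G.det := by
    rw [← Matrix.det_mul, hSS]
  -- determinant of M
  have hdet : (T * A * T).det = ((-(G.det) / 4 : ℝ) : ℂ) := by
    have hdT : T.det = (S.det : ℂ) := by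
      rw [hT, Matrix.det_fin_two, Matrix.det_fin_two]
      simp [Matrix.map_apply]
    have hdA : A.det = (-1/4 : ℂ) := by
      rw [Matrix.det_fin_two, hA00, hA01, hA10, hA11]
      simp [Complex.ext_iff]
      norm_num
    rw [Matrix.det_mul, Matrix.det_mul, hdT, hdA, ← hdetS]
    push_cast
    ring
  -- eigenvalues
  have hsum : hH.eigenvalues 0 + hH.eigenvalues 1 = 0 := by
    have := trace_eq_sum_eig hH
    rw [htr, Fin.sum_univ_two] at this
    exact_mod_cast this.symm
  have hprod : hH.eigenvalues 0 * hH.eigenvalues 1 = -(G.det) / 4 := by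
    have := hH.det_eq_prod_eigenvalues
    rw [hdet, Fin.prod_univ_two] at this
    apply Complex.ofReal_inj.mp
    rw [this]
    push_cast
    rfl
  have h1 : hH.eigenvalues 1 = -hH.eigenvalues 0 := by linarith
  have hsq : hH.eigenvalues 0 ^ 2 = G.det / 4 := by
    rw [h1] at hprod; nlinarith
  have habs : |hH.eigenvalues 0| = Real.sqrt G.det / 2 := by
    rw [← Real.sqrt_sq_eq_abs, hsq,
      show G.det / 4 = (Real.sqrt G.det / 2)^2 by
        rw [div_pow, Real.sq_sqrt hG.det_pos.le]; norm_num,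
      Real.sqrt_sq (by positivity)]
  have habssum : (∑ i, |hH.eigenvalues i| : ℝ) = Real.sqrt G.det := by
    rw [Fin.sum_univ_two, h1, abs_neg, habs]; ring
  -- trace part
  have hTT : T * T = G.map (fun x => (x : ℂ)) := by
    rw [hT, ← hSS]
    ext i j
    simp [Matrix.mul_apply, Matrix.map_apply, Fin.sum_univ_two]
  have htrG : (T * ((((N + 1/2 : ℝ)) : ℂ) • (1 : Matrix (Fin 2) (Fin 2) ℂ)) * T).trace
      = ((N + 1/2 : ℝ) : ℂ) * ((G.trace : ℝ) : ℂ) := by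
    rw [Matrix.mul_smul, Matrix.mul_one, Matrix.smul_mul, Matrix.trace_smul, hTT]
    simp [Matrix.trace_fin_two, Matrix.map_apply, smul_eq_mul]
  rw [htrG, habssum]
  push_cast
  ring
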